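/- Let U be continuous and strictly increasing and h : [0,1] → [0,1] strictly increasing and continuous with h(0)=0, h(1)=1. Fix x₀, ε₁ > 0, and 0 < ε₂ ≤ min(p₀, 1-p₀) with p₀ < 1. Then the equation (h(p₀+ε₂)-h(p₀-ε₂))·U(x₀) = (h(p₀-μ)-h(p₀-ε₂))·U(x₀-ε₁) + (h(p₀+ε₂)-h(p₀-μ))·U(x₀+ε₁) has a unique solution μ ∈ [-ε₂, ε₂]. If moreover h is concave on (0,1), then μ ≥ the solution obtained when h is the identity. -/

import Mathlib

open Set

open Filter Topology in
lemma concaveOn_Icc_of_Ioo {h : ℝ → ℝ} (hc : ContinuousOn h (Icc 0 1))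
    (hcv : ConcaveOn ℝ (Ioo 0 1) h) : ConcaveOn ℝ (Icc 0 1) h := by
  have key : ∀ x y : ℝ, x ∈ Icc (0:ℝ) 1 → y ∈ Icc (0:ℝ) 1 → x < y →
      ∀ a b : ℝ, 0 ≤ a → 0 ≤ b → a + b = 1 →
      a * h x + b * h y ≤ h (a * x + b * y) := by
    intro x y hx hy hxy a b ha hb hab
    set xf : ℝ → ℝ := fun ε => x + ε * (y - x) with hxf
    set yf : ℝ → ℝ := fun ε => y - ε * (y - x) with hyf
    have hmemx : ∀ᶠ ε in 𝓝[>] (0:ℝ), xf ε ∈ Ioo (0:ℝ) 1 := by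
      filter_upwards [Ioo_mem_nhdsGT_of_mem (by norm_num : (0:ℝ) ∈ Ico (0:ℝ) (1/2))]
        with ε hε
      have h1 := hx.1; have h2 := hy.2; have he1 := hε.1; have he2 := hε.2
      have k1 : 0 < ε * (y - x) := mul_pos he1 (by linarith)
      have k2 : 0 < (1/2 - ε) * (y - x) := mul_pos (by linarith) (by linarith)
      constructor <;> simp only [hxf] <;> nlinarith
    have hmemy : ∀ᶠ ε in 𝓝[>] (0:ℝ), yf ε ∈ Ioo (0:ℝ) 1 := by
      filter_upwards [Ioo_mem_nhdsGT_of_mem (by norm_num : (0:ℝ) ∈ Ico (0:ℝ) (1/2))]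
        with ε hε
      have h1 := hx.1; have h2 := hy.2; have he1 := hε.1; have he2 := hε.2
      have k1 : 0 < ε * (y - x) := mul_pos he1 (by linarith)
      have k2 : 0 < (1/2 - ε) * (y - x) := mul_pos (by linarith) (by linarith)
      constructor <;> simp only [hyf] <;> nlinarith
    -- limit lemma
    have tendlem : ∀ (f : ℝ → ℝ) (c : ℝ), c ∈ Icc (0:ℝ) 1 →
        Tendsto f (𝓝[>] (0:ℝ)) (𝓝 c) → (∀ᶠ ε in 𝓝[>] (0:ℝ), f ε ∈ Icc (0:ℝ) 1) →
        Tendsto (fun ε => h (f ε)) (𝓝[>] (0:ℝ)) (𝓝 (h c)) := by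
      intro f c hcmem hf hev
      exact (hc c hcmem).tendsto.comp
        (tendsto_nhdsWithin_of_tendsto_nhds_of_eventually_within _ hf hev)
    have txf : Tendsto xf (𝓝[>] (0:ℝ)) (𝓝 x) := by
      have : Tendsto xf (𝓝 (0:ℝ)) (𝓝 (x + 0 * (y - x))) := by
        exact (continuous_const.add (continuous_id.mul continuous_const)).tendsto 0
      simpa using this.mono_left nhdsWithin_le_nhds
    have tyf : Tendsto yf (𝓝[>] (0:ℝ)) (𝓝 y) := by
      have : Tendsto yf (𝓝 (0:ℝ)) (𝓝 (y - 0 * (y - x))) := by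
        exact (continuous_const.sub (continuous_id.mul continuous_const)).tendsto 0
      simpa using this.mono_left nhdsWithin_le_nhds
    have tzf : Tendsto (fun ε => a * xf ε + b * yf ε) (𝓝[>] (0:ℝ)) (𝓝 (a * x + b * y)) :=
      (txf.const_mul a).add (tyf.const_mul b)
    have hmemx' : ∀ᶠ ε in 𝓝[>] (0:ℝ), xf ε ∈ Icc (0:ℝ) 1 :=
      hmemx.mono fun ε hε => Ioo_subset_Icc_self hε
    have hmemy' : ∀ᶠ ε in 𝓝[>] (0:ℝ), yf ε ∈ Icc (0:ℝ) 1 :=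
      hmemy.mono fun ε hε => Ioo_subset_Icc_self hε
    have hmemz' : ∀ᶠ ε in 𝓝[>] (0:ℝ), a * xf ε + b * yf ε ∈ Icc (0:ℝ) 1 := by
      filter_upwards [hmemx', hmemy'] with ε h1 h2
      constructor
      · nlinarith [h1.1, h2.1]
      · nlinarith [h1.2, h2.2]
    have hzmem : a * x + b * y ∈ Icc (0:ℝ) 1 := by
      constructor
      · nlinarith [hx.1, hy.1]
      · nlinarith [hx.2, hy.2]
    have t1 : Tendsto (fun ε => a * h (xf ε) + b * h (yf ε)) (𝓝[>] (0:ℝ))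
        (𝓝 (a * h x + b * h y)) :=
      ((tendlem xf x hx txf hmemx').const_mul a).add ((tendlem yf y hy tyf hmemy').const_mul b)
    have t2 : Tendsto (fun ε => h (a * xf ε + b * yf ε)) (𝓝[>] (0:ℝ))
        (𝓝 (h (a * x + b * y))) :=
      tendlem _ _ hzmem tzf hmemz'
    refine le_of_tendsto_of_tendsto t1 t2 ?_
    filter_upwards [hmemx, hmemy] with ε h1 h2
    have := hcv.2 h1 h2 ha hb hab
    simpa [smul_eq_mul] using this
  refine ⟨convex_Icc 0 1, ?_⟩
  intro x hx y hy a b ha hb hab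
  rcases lt_trichotomy x y with hlt | heq | hgt
  · simpa [smul_eq_mul] using key x y hx hy hlt a b ha hb hab
  · subst heq
    have e1 : a • x + b • x = x := by rw [← add_smul, hab, one_smul]
    have e2 : a • h x + b • h x = h x := by rw [← add_smul, hab, one_smul]
    rw [e1, e2]
  · have := key y x hy hx hgt b a hb ha (by linarith)
    simpa [smul_eq_mul, add_comm] using this

/-- Existence and uniqueness of the RDU probability premium μ, and its domination
of the EU probability premium when h is concave. -/
theorem rdu_probability_premium_exists_unique_ge_eu
    (U h : ℝ → ℝ) (x₀ ε₁ p₀ ε₂ : ℝ)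
    (hUc : Continuous U) (hUm : StrictMono U)
    (hhm : StrictMonoOn h (Icc 0 1)) (hhc : ContinuousOn h (Icc 0 1))
    (hmap : ∀ p ∈ Icc (0:ℝ) 1, h p ∈ Icc (0:ℝ) 1)
    (h0 : h 0 = 0) (h1 : h 1 = 1)
    (hε₁ : 0 < ε₁) (hε₂ : 0 < ε₂) (hε₂le : ε₂ ≤ min p₀ (1 - p₀)) (hp : p₀ < 1) :
    (∃! μ : ℝ, μ ∈ Icc (-ε₂) ε₂ ∧
        (h (p₀ + ε₂) - h (p₀ - ε₂)) * U x₀ =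
          (h (p₀ - μ) - h (p₀ - ε₂)) * U (x₀ - ε₁) +
          (h (p₀ + ε₂) - h (p₀ - μ)) * U (x₀ + ε₁)) ∧
    (ConcaveOn ℝ (Ioo 0 1) h →
      ∀ μ μid : ℝ, μ ∈ Icc (-ε₂) ε₂ → μid ∈ Icc (-ε₂) ε₂ →
        (h (p₀ + ε₂) - h (p₀ - ε₂)) * U x₀ =
          (h (p₀ - μ) - h (p₀ - ε₂)) * U (x₀ - ε₁) +
          (h (p₀ + ε₂) - h (p₀ - μ)) * U (x₀ + ε₁) →
        (2 * ε₂) * U x₀ =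
          (ε₂ - μid) * U (x₀ - ε₁) + (ε₂ + μid) * U (x₀ + ε₁) →
        μid ≤ μ) := by
  have hle1 : ε₂ ≤ p₀ := le_trans hε₂le (min_le_left _ _)
  have hle2 : ε₂ ≤ 1 - p₀ := le_trans hε₂le (min_le_right _ _)
  have hmemlo : p₀ - ε₂ ∈ Icc (0:ℝ) 1 := ⟨by linarith, by linarith⟩
  have hmemhi : p₀ + ε₂ ∈ Icc (0:ℝ) 1 := ⟨by linarith, by linarith⟩
  have hmem : ∀ μ ∈ Icc (-ε₂) ε₂, p₀ - μ ∈ Icc (0:ℝ) 1 :=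
    fun μ hμ => ⟨by linarith [hμ.2], by linarith [hμ.1]⟩
  have hU1 : U (x₀ - ε₁) < U x₀ := hUm (by linarith)
  have hU2 : U x₀ < U (x₀ + ε₁) := hUm (by linarith)
  have hCA : h (p₀ - ε₂) < h (p₀ + ε₂) := hhm hmemlo hmemhi (by linarith)
  set g : ℝ → ℝ := fun μ =>
    (h (p₀ - μ) - h (p₀ - ε₂)) * U (x₀ - ε₁) +
      (h (p₀ + ε₂) - h (p₀ - μ)) * U (x₀ + ε₁) -
      (h (p₀ + ε₂) - h (p₀ - ε₂)) * U x₀ with hg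
  have hgc : ContinuousOn g (Icc (-ε₂) ε₂) := by
    have hcomp : ContinuousOn (fun μ => h (p₀ - μ)) (Icc (-ε₂) ε₂) :=
      hhc.comp ((continuous_const.sub continuous_id).continuousOn) hmem
    exact (((hcomp.sub continuousOn_const).mul continuousOn_const).add
      ((continuousOn_const.sub hcomp).mul continuousOn_const)).sub continuousOn_const
  have hgm : StrictMonoOn g (Icc (-ε₂) ε₂) := by
    intro μ1 h1' μ2 h2' hlt
    have hh : h (p₀ - μ2) < h (p₀ - μ1) :=
      hhm (hmem _ h2') (hmem _ h1') (by linarith)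
    simp only [hg]
    nlinarith [mul_pos (sub_pos.2 hh) (sub_pos.2 (hU1.trans hU2))]
  have hglo : g (-ε₂) < 0 := by
    simp only [hg, sub_neg_eq_add]
    nlinarith [sub_pos.2 hCA, sub_pos.2 hU1]
  have hghi : 0 < g ε₂ := by
    simp only [hg]
    nlinarith [sub_pos.2 hCA, sub_pos.2 hU2]
  obtain ⟨μ₀, hμ₀mem, hμ₀⟩ :=
    intermediate_value_Icc (by linarith : -ε₂ ≤ ε₂) hgc ⟨hglo.le, hghi.le⟩
  have hiff : ∀ μ : ℝ,
      ((h (p₀ + ε₂) - h (p₀ - ε₂)) * U x₀ =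
        (h (p₀ - μ) - h (p₀ - ε₂)) * U (x₀ - ε₁) +
        (h (p₀ + ε₂) - h (p₀ - μ)) * U (x₀ + ε₁)) ↔ g μ = 0 := by
    intro μ; simp only [hg]; constructor <;> intro hh <;> linarith
  constructor
  · refine ⟨μ₀, ⟨hμ₀mem, (hiff μ₀).2 hμ₀⟩, ?_⟩
    rintro μ' ⟨hμ'mem, hμ'⟩
    exact hgm.injOn hμ'mem hμ₀mem (by rw [(hiff μ').1 hμ', hμ₀])
  · intro hconc μ μid hμ hμid heq heqid
    have hconc' : ConcaveOn ℝ (Icc 0 1) h := concaveOn_Icc_of_Ioo hhc hconc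
    set A := h (p₀ - ε₂) with hA
    set B := h (p₀ - μ) with hB
    set C := h (p₀ + ε₂) with hC
    have hK : ((C - A) * (ε₂ - μid) - 2 * ε₂ * (B - A)) * (U (x₀ - ε₁) - U (x₀ + ε₁)) = 0 := by
      linear_combination (2 * ε₂) * heq - (C - A) * heqid
    have hK0 : (C - A) * (ε₂ - μid) - 2 * ε₂ * (B - A) = 0 := by
      rcases mul_eq_zero.mp hK with hk | hk
      · exact hk
      · exfalso; have : U (x₀ - ε₁) < U (x₀ + ε₁) := hU1.trans hU2; linarith
    set t : ℝ := (ε₂ - μid) / (2 * ε₂) with ht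
    have ht0 : 0 ≤ t := div_nonneg (by linarith [hμid.2]) (by linarith)
    have ht1 : t ≤ 1 := by
      rw [ht, div_le_one (by linarith)]; linarith [hμid.1]
    have hBeq : B = (1 - t) * A + t * C := by
      have h2ε : (2 * ε₂) ≠ 0 := by positivity
      rw [ht]; field_simp
      linarith [hK0]
    have hcc := hconc'.2 hmemlo hmemhi (by linarith : (0:ℝ) ≤ 1 - t) ht0 (by ring)
    simp only [smul_eq_mul] at hcc
    have harg : (1 - t) * (p₀ - ε₂) + t * (p₀ + ε₂) = p₀ - μid := by
      have h2ε : (2 * ε₂) ≠ 0 := by positivity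
      rw [ht]; field_simp; ring
    rw [harg] at hcc
    have hfin : B ≤ h (p₀ - μid) := by rw [hBeq]; exact hcc
    by_contra hcon
    push_neg at hcon
    have : h (p₀ - μid) < B :=
      hhm (hmem _ hμid) (hmem _ hμ) (by linarith)
    linarith
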